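/- Let M_s(t) be a C¹ family of symmetric n×n matrices with d/dt M_s having eigenvalues bounded above by λ_max(Ṁ_s), and let G_v > 0, G_f > 0, G_p symmetric positive definite. Along trajectories of (I + G_f M_s) ë_p + G_v ė_p + G_p e_p = 0, the function V₁ = ½ ė_pᵀ ė_p + ½ G_f ė_pᵀ M_s ė_p + ½ e_pᵀ G_p e_p has derivative V̇₁ = −½ ė_pᵀ (2G_v I − G_f Ṁ_s) ė_p, and V̇₁ < 0 whenever ė_p ≠ 0, provided G_f < 2G_v / λ_max(Ṁ_s). -/

import Mathlib

open Matrix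
open scoped RealInnerProductSpace

/-- Force-error feedback analysis: along `(I + G_f M_s) ë + G_v ė + G_p e = 0` with
`M_s(t)` symmetric (entrywise `C¹`, derivative `M'` with eigenvalues bounded by `λmax`),
the Lyapunov function `V₁ = ½ ėᵀė + ½ G_f ėᵀ M_s ė + ½ eᵀ G_p e` satisfies
`V̇₁ = −½ ėᵀ (2 G_v I − G_f Ṁ_s) ė`, which is negative for `ė ≠ 0` provided
`G_f < 2 G_v / λmax`. -/
theorem force_feedback_lyapunov
    (n : ℕ)
    (Ms Ms' : ℝ → Matrix (Fin n) (Fin n) ℝ)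
    (hMsym : ∀ t, (Ms t).IsSymm)
    (hMder : ∀ t i j, HasDerivAt (fun s => Ms s i j) (Ms' t i j) t)
    (lmax : ℝ) (hlmax : 0 < lmax)
    (hM'bound : ∀ t (x : EuclideanSpace ℝ (Fin n)),
      ⟪x, (WithLp.equiv 2 (Fin n → ℝ)).symm ((Ms' t).mulVec x)⟫ ≤ lmax * ‖x‖ ^ 2)
    (Gv Gf : ℝ) (hGv : 0 < Gv) (hGf : 0 < Gf)
    (Gp : Matrix (Fin n) (Fin n) ℝ) (hGp : Gp.PosDef) (hGpsym : Gp.IsSymm)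
    (e e' e'' : ℝ → EuclideanSpace ℝ (Fin n))
    (he : ∀ t, HasDerivAt e (e' t) t)
    (he' : ∀ t, HasDerivAt e' (e'' t) t)
    (hdyn : ∀ t,
      (WithLp.equiv 2 (Fin n → ℝ)).symm
          (((1 : Matrix (Fin n) (Fin n) ℝ) + Gf • Ms t).mulVec (e'' t))
        + Gv • e' t
        + (WithLp.equiv 2 (Fin n → ℝ)).symm (Gp.mulVec (e t)) = 0)
    (V₁ : ℝ → ℝ)
    (hV₁ : V₁ = fun t =>
      (1 / 2) * ⟪e' t, e' t⟫
      + (1 / 2) * Gf * ⟪e' t, (WithLp.equiv 2 (Fin n → ℝ)).symm ((Ms t).mulVec (e' t))⟫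
      + (1 / 2) * ⟪e t, (WithLp.equiv 2 (Fin n → ℝ)).symm (Gp.mulVec (e t))⟫) :
    (∀ t, HasDerivAt V₁
      (-(1 / 2) * ⟪e' t, (WithLp.equiv 2 (Fin n → ℝ)).symm
        ((((2 * Gv) • (1 : Matrix (Fin n) (Fin n) ℝ)) - Gf • Ms' t).mulVec (e' t))⟫) t) ∧
    (Gf < 2 * Gv / lmax → ∀ t, e' t ≠ 0 → deriv V₁ t < 0) := by
  classical
  have hce : ∀ t (i : Fin n), HasDerivAt (fun s => e s i) (e' t i) t := fun t i =>
    (EuclideanSpace.proj (𝕜 := ℝ) i).hasFDerivAt.comp_hasDerivAt t (he t)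
  have hce' : ∀ t (i : Fin n), HasDerivAt (fun s => e' s i) (e'' t i) t := fun t i =>
    (EuclideanSpace.proj (𝕜 := ℝ) i).hasFDerivAt.comp_hasDerivAt t (he' t)
  have hinner : ∀ (x y : EuclideanSpace ℝ (Fin n)), ⟪x, y⟫ = ∑ i, x i * y i := by
    intro x y
    simp [PiLp.inner_apply, RCLike.inner_apply, conj_trivial]
    exact Finset.sum_congr rfl fun i _ => mul_comm _ _
  have hV₁' : V₁ = fun s =>
      (1 / 2) * (∑ i, e' s i * e' s i)
      + (1 / 2) * Gf * (∑ i, e' s i * (∑ j, Ms s i j * e' s j))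
      + (1 / 2) * (∑ i, e s i * (∑ j, Gp i j * e s j)) := by
    rw [hV₁]; funext s
    rw [hinner, hinner, hinner]
    simp [Matrix.mulVec, dotProduct, WithLp.equiv_symm_apply, PiLp.toLp_apply]
  have hdi : ∀ t (i : Fin n),
      e'' t i + Gf * (∑ j, Ms t i j * e'' t j) + Gv * e' t i
        + (∑ j, Gp i j * e t j) = 0 := by
    intro t i
    have h := congrArg (fun v : EuclideanSpace ℝ (Fin n) => v i) (hdyn t)
    simpa [Matrix.add_mulVec, Matrix.one_mulVec, Matrix.smul_mulVec,
      Matrix.mulVec, dotProduct, WithLp.equiv_symm_apply, PiLp.toLp_apply,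
      Finset.mul_sum, add_assoc] using h
  have key : ∀ t, HasDerivAt V₁
      (-(1 / 2) * ⟪e' t, (WithLp.equiv 2 (Fin n → ℝ)).symm
        ((((2 * Gv) • (1 : Matrix (Fin n) (Fin n) ℝ)) - Gf • Ms' t).mulVec (e' t))⟫) t := by
    intro t
    have d1 : HasDerivAt (fun s => ∑ i : Fin n, e' s i * e' s i)
        (∑ i : Fin n, (e'' t i * e' t i + e' t i * e'' t i)) t :=
      HasDerivAt.fun_sum fun i _ => (hce' t i).mul (hce' t i)
    have d2 : HasDerivAt (fun s => ∑ i : Fin n, e' s i * (∑ j, Ms s i j * e' s j))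
        (∑ i : Fin n, (e'' t i * (∑ j, Ms t i j * e' t j)
          + e' t i * (∑ j, (Ms' t i j * e' t j + Ms t i j * e'' t j)))) t :=
      HasDerivAt.fun_sum fun i _ => (hce' t i).mul
        (HasDerivAt.fun_sum fun j _ => (hMder t i j).mul (hce' t j))
    have d3 : HasDerivAt (fun s => ∑ i : Fin n, e s i * (∑ j, Gp i j * e s j))
        (∑ i : Fin n, (e' t i * (∑ j, Gp i j * e t j)
          + e t i * (∑ j, Gp i j * e' t j))) t :=
      HasDerivAt.fun_sum fun i _ => (hce t i).mul
        (HasDerivAt.fun_sum fun j _ => (hce t j).const_mul (Gp i j))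
    have dall := ((d1.const_mul ((1:ℝ) / 2)).add (d2.const_mul ((1 / 2) * Gf))).add
      (d3.const_mul ((1:ℝ) / 2))
    rw [hV₁']
    convert dall using 1
    case e'_4 => rfl
    case e'_5 => rfl
    case e'_8 => rfl
    have f1 : ∑ i, e'' t i * (∑ j, Ms t i j * e' t j)
        = ∑ i, e' t i * (∑ j, Ms t i j * e'' t j) := by
      calc ∑ i, e'' t i * (∑ j, Ms t i j * e' t j)
          = ∑ i, ∑ j, e'' t i * (Ms t i j * e' t j) :=
            Finset.sum_congr rfl fun i _ => Finset.mul_sum _ _ _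
        _ = ∑ j, ∑ i, e'' t i * (Ms t i j * e' t j) := Finset.sum_comm
        _ = ∑ j, e' t j * (∑ i, Ms t j i * e'' t i) := by
            refine Finset.sum_congr rfl fun j _ => ?_
            rw [Finset.mul_sum]
            exact Finset.sum_congr rfl fun i _ => by rw [(hMsym t).apply j i]; ring
    have f2 : ∑ i, e t i * (∑ j, Gp i j * e' t j)
        = ∑ i, e' t i * (∑ j, Gp i j * e t j) := by
      calc ∑ i, e t i * (∑ j, Gp i j * e' t j)
          = ∑ i, ∑ j, e t i * (Gp i j * e' t j) :=
            Finset.sum_congr rfl fun i _ => Finset.mul_sum _ _ _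
        _ = ∑ j, ∑ i, e t i * (Gp i j * e' t j) := Finset.sum_comm
        _ = ∑ j, e' t j * (∑ i, Gp j i * e t i) := by
            refine Finset.sum_congr rfl fun j _ => ?_
            rw [Finset.mul_sum]
            exact Finset.sum_congr rfl fun i _ => by rw [hGpsym.apply j i]; ring
    have f3 : (∑ i, e' t i * e'' t i) + Gf * (∑ i, e' t i * (∑ j, Ms t i j * e'' t j))
        + Gv * (∑ i, e' t i * e' t i) + (∑ i, e' t i * (∑ j, Gp i j * e t j)) = 0 := by
      have h0 : ∑ i, e' t i * (e'' t i + Gf * (∑ j, Ms t i j * e'' t j) + Gv * e' t i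
          + (∑ j, Gp i j * e t j)) = 0 :=
        Finset.sum_eq_zero fun i _ => by rw [hdi t i, mul_zero]
      calc (∑ i, e' t i * e'' t i) + Gf * (∑ i, e' t i * (∑ j, Ms t i j * e'' t j))
            + Gv * (∑ i, e' t i * e' t i) + (∑ i, e' t i * (∑ j, Gp i j * e t j))
          = ∑ i, (e' t i * e'' t i + Gf * (e' t i * (∑ j, Ms t i j * e'' t j))
              + Gv * (e' t i * e' t i) + e' t i * (∑ j, Gp i j * e t j)) := by
            simp [Finset.sum_add_distrib, Finset.mul_sum]
        _ = ∑ i, e' t i * (e'' t i + Gf * (∑ j, Ms t i j * e'' t j) + Gv * e' t i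
              + (∑ j, Gp i j * e t j)) := Finset.sum_congr rfl fun i _ => by ring
        _ = 0 := h0
    have hLHS : ⟪e' t, (WithLp.equiv 2 (Fin n → ℝ)).symm
        ((((2 * Gv) • (1 : Matrix (Fin n) (Fin n) ℝ)) - Gf • Ms' t).mulVec (e' t))⟫
        = 2 * Gv * (∑ i, e' t i * e' t i)
          - Gf * (∑ i, e' t i * (∑ j, Ms' t i j * e' t j)) := by
      rw [hinner]
      calc ∑ i, e' t i * ((WithLp.equiv 2 (Fin n → ℝ)).symm
              ((((2 * Gv) • (1 : Matrix (Fin n) (Fin n) ℝ)) - Gf • Ms' t).mulVec (e' t)) i)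
          = ∑ i, (2 * Gv * (e' t i * e' t i)
              - Gf * (e' t i * (∑ j, Ms' t i j * e' t j))) := by
            refine Finset.sum_congr rfl fun i _ => ?_
            simp only [WithLp.equiv_symm_apply, PiLp.toLp_apply, Matrix.sub_mulVec,
              Matrix.smul_mulVec, Matrix.one_mulVec, Pi.sub_apply, Pi.smul_apply,
              smul_eq_mul, Matrix.mulVec, dotProduct]
            ring
        _ = _ := by
            rw [Finset.sum_sub_distrib, ← Finset.mul_sum, ← Finset.mul_sum]
    have e1 : ∑ i, (e'' t i * e' t i + e' t i * e'' t i)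
        = (∑ i, e' t i * e'' t i) + (∑ i, e' t i * e'' t i) := by
      rw [Finset.sum_add_distrib]
      congr 1
      exact Finset.sum_congr rfl fun i _ => mul_comm _ _
    have e2 : ∑ i, (e'' t i * (∑ j, Ms t i j * e' t j)
          + e' t i * (∑ j, (Ms' t i j * e' t j + Ms t i j * e'' t j)))
        = (∑ i, e' t i * (∑ j, Ms t i j * e'' t j))
          + ((∑ i, e' t i * (∑ j, Ms' t i j * e' t j))
            + (∑ i, e' t i * (∑ j, Ms t i j * e'' t j))) := by
      rw [Finset.sum_add_distrib, f1]
      congr 1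
      calc ∑ i, e' t i * (∑ j, (Ms' t i j * e' t j + Ms t i j * e'' t j))
          = ∑ i, (e' t i * (∑ j, Ms' t i j * e' t j)
              + e' t i * (∑ j, Ms t i j * e'' t j)) :=
            Finset.sum_congr rfl fun i _ => by rw [Finset.sum_add_distrib, mul_add]
        _ = _ := Finset.sum_add_distrib
    have e3 : ∑ i, (e' t i * (∑ j, Gp i j * e t j) + e t i * (∑ j, Gp i j * e' t j))
        = (∑ i, e' t i * (∑ j, Gp i j * e t j))
          + (∑ i, e' t i * (∑ j, Gp i j * e t j)) := by
      rw [Finset.sum_add_distrib, f2]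
    rw [hLHS, e1, e2, e3]
    linear_combination -f3
  refine ⟨key, ?_⟩
  intro hGflt t ht
  rw [(key t).deriv]
  have hn2 : (0:ℝ) < ‖e' t‖ ^ 2 := pow_pos (norm_pos_iff.mpr ht) 2
  have hsplit : ⟪e' t, (WithLp.equiv 2 (Fin n → ℝ)).symm
      ((((2 * Gv) • (1 : Matrix (Fin n) (Fin n) ℝ)) - Gf • Ms' t).mulVec (e' t))⟫
      = 2 * Gv * ‖e' t‖ ^ 2
        - Gf * ⟪e' t, (WithLp.equiv 2 (Fin n → ℝ)).symm ((Ms' t).mulVec (e' t))⟫ := by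
    have hns : ‖e' t‖ ^ 2 = ∑ i, e' t i * e' t i := by
      rw [← real_inner_self_eq_norm_sq, hinner]
    rw [hinner, hinner, hns]
    calc ∑ i, e' t i * ((WithLp.equiv 2 (Fin n → ℝ)).symm
            ((((2 * Gv) • (1 : Matrix (Fin n) (Fin n) ℝ)) - Gf • Ms' t).mulVec (e' t)) i)
        = ∑ i, (2 * Gv * (e' t i * e' t i)
            - Gf * (e' t i * ((WithLp.equiv 2 (Fin n → ℝ)).symm
              ((Ms' t).mulVec (e' t)) i))) := by
          refine Finset.sum_congr rfl fun i _ => ?_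
          simp only [WithLp.equiv_symm_apply, PiLp.toLp_apply, Matrix.sub_mulVec,
            Matrix.smul_mulVec, Matrix.one_mulVec, Pi.sub_apply, Pi.smul_apply,
            smul_eq_mul]
          ring
      _ = _ := by
          rw [Finset.sum_sub_distrib, ← Finset.mul_sum, ← Finset.mul_sum]
  rw [hsplit]
  have hb := hM'bound t (e' t)
  have hGfl : Gf * lmax < 2 * Gv := by
    rw [lt_div_iff₀ hlmax] at hGflt
    linarith
  have h1 : Gf * ⟪e' t, (WithLp.equiv 2 (Fin n → ℝ)).symm ((Ms' t).mulVec (e' t))⟫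
      ≤ Gf * (lmax * ‖e' t‖ ^ 2) := by
    exact mul_le_mul_of_nonneg_left hb hGf.le
  nlinarith [hn2, h1, hGfl]
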